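/- arXiv:2303.05566 — 3 statements merged into one kernel-verified Lean document; each statement's English description precedes it below -/
import Mathlib

section
/- Let μ = gaussianReal m₁ v₁ and ν = gaussianReal m₂ v₂ be Gaussian probability measures on ℝ with means m₁, m₂ ∈ ℝ and variances v₁, v₂ ≥ 0. Then for every 1-Lipschitz function h : ℝ → ℝ that is integrable with respect to both μ and ν, |∫ h dμ − ∫ h dν| ≤ √((m₁ − m₂)² + (√v₁ − √v₂)²). -/
open MeasureTheory ProbabilityTheory NNReal

namespace GaussWassAux

open Real Set

lemma pdf_eq (x : ℝ) :
    gaussianPDFReal 0 1 x = (Real.sqrt (2 * π))⁻¹ * Real.exp (-(2⁻¹) * x ^ 2) := by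
  simp only [gaussianPDFReal, NNReal.coe_one, mul_one, sub_zero]
  congr 1
  ring_nf

lemma pdf_cast : gaussianPDF 0 1 = fun x => ((gaussianPDFReal 0 1 x).toNNReal : ENNReal) := by
  funext x; rfl

lemma integral_std (g : ℝ → ℝ) :
    ∫ x, g x ∂(gaussianReal 0 1) = ∫ x, gaussianPDFReal 0 1 x * g x := by
  rw [gaussianReal_of_var_ne_zero 0 one_ne_zero]
  have hmeas : Measurable fun x => (gaussianPDFReal 0 1 x).toNNReal :=
    (measurable_gaussianPDFReal 0 1).real_toNNReal
  rw [pdf_cast, integral_withDensity_eq_integral_smul hmeas]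
  refine integral_congr_ae (Filter.Eventually.of_forall fun x => ?_)
  simp [NNReal.smul_def, Real.coe_toNNReal _ (gaussianPDFReal_nonneg 0 1 x)]

lemma integrable_std_iff (g : ℝ → ℝ) :
    Integrable g (gaussianReal 0 1) ↔
      Integrable (fun x => gaussianPDFReal 0 1 x * g x) volume := by
  rw [gaussianReal_of_var_ne_zero 0 one_ne_zero]
  have hmeas : Measurable fun x => (gaussianPDFReal 0 1 x).toNNReal :=
    (measurable_gaussianPDFReal 0 1).real_toNNReal
  rw [pdf_cast, integrable_withDensity_iff_integrable_smul hmeas]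
  constructor <;> intro hI <;> refine hI.congr (Filter.Eventually.of_forall fun x => ?_) <;>
    simp [NNReal.smul_def, Real.coe_toNNReal _ (gaussianPDFReal_nonneg 0 1 x)]

lemma int_aux (n : ℕ) :
    Integrable (fun x : ℝ => x ^ n * Real.exp (-(2⁻¹) * x ^ 2)) volume := by
  have h := integrable_rpow_mul_exp_neg_mul_sq (b := 2⁻¹) (by norm_num)
    (s := (n : ℝ)) (lt_of_lt_of_le neg_one_lt_zero (Nat.cast_nonneg n))
  simpa [Real.rpow_natCast] using h

lemma i_poly (n : ℕ) : Integrable (fun x => x ^ n) (gaussianReal 0 1) := by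
  rw [integrable_std_iff]
  have heq : (fun x => gaussianPDFReal 0 1 x * x ^ n)
      = fun x => (Real.sqrt (2 * π))⁻¹ * (x ^ n * Real.exp (-(2⁻¹) * x ^ 2)) := by
    funext x; rw [pdf_eq]; ring
  rw [heq]
  exact (int_aux n).const_mul _

lemma m1 : ∫ x, x ∂(gaussianReal 0 1) = 0 := by
  rw [integral_std]
  have hodd : ∀ x : ℝ, gaussianPDFReal 0 1 (-x) * (-x) = -(gaussianPDFReal 0 1 x * x) := by
    intro x; rw [pdf_eq, pdf_eq]; ring_nf
  have h2 := integral_neg_eq_self (fun x => gaussianPDFReal 0 1 x * x) (volume : Measure ℝ)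
  simp only [hodd, integral_neg] at h2
  linarith

lemma m2 : ∫ x, x ^ 2 ∂(gaussianReal 0 1) = 1 := by
  rw [integral_std]
  have key : ∫ x : ℝ, gaussianPDFReal 0 1 x * x ^ 2
      = 2 * ∫ x in Ioi (0 : ℝ),
          (Real.sqrt (2 * π))⁻¹ * (x ^ (2 : ℝ) * Real.exp (-(2⁻¹) * x ^ (2 : ℝ))) := by
    rw [← integral_comp_abs
      (f := fun t => (Real.sqrt (2 * π))⁻¹ * (t ^ (2 : ℝ) * Real.exp (-(2⁻¹) * t ^ (2 : ℝ))))]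
    refine integral_congr_ae (Filter.Eventually.of_forall fun x => ?_)
    simp only [Real.rpow_two, sq_abs, pdf_eq]
    ring
  rw [key, integral_const_mul, integral_rpow_mul_exp_neg_mul_rpow (by norm_num) (by norm_num)
    (by norm_num)]
  have hΓ : Real.Gamma ((2 + 1) / 2) = (1 / 2) * Real.sqrt π := by
    have h32 : ((2 : ℝ) + 1) / 2 = 1 / 2 + 1 := by norm_num
    rw [h32, Real.Gamma_add_one (by norm_num), Real.Gamma_one_half_eq]
  have hb : ((2 : ℝ)⁻¹) ^ (-((2 : ℝ) + 1) / 2) = 2 * Real.sqrt 2 := by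
    rw [Real.inv_rpow (by norm_num : (0:ℝ) ≤ 2), ← Real.rpow_neg (by norm_num : (0:ℝ) ≤ 2)]
    rw [show (-(-((2:ℝ)+1)/2)) = 1 + 1/2 by norm_num, Real.rpow_add (by norm_num),
      Real.rpow_one, ← Real.sqrt_eq_rpow]
  rw [hΓ, hb]
  rw [Real.sqrt_mul (by norm_num) π]
  have h2 : Real.sqrt 2 > 0 := Real.sqrt_pos.mpr (by norm_num)
  have hπ : Real.sqrt π > 0 := Real.sqrt_pos.mpr Real.pi_pos
  have h22 : Real.sqrt 2 * Real.sqrt 2 = 2 := Real.mul_self_sqrt (by norm_num)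
  field_simp

lemma map_std (m : ℝ) (v : ℝ≥0) :
    (gaussianReal 0 1).map (fun x => Real.sqrt v * x + m) = gaussianReal m v := by
  have h1 : (gaussianReal 0 1).map (fun x => Real.sqrt v * x) = gaussianReal 0 v := by
    rw [gaussianReal_map_const_mul (Real.sqrt v), mul_zero]
    congr 1
    ext
    simp [Real.sq_sqrt v.2]
  have h2 : (fun x : ℝ => Real.sqrt v * x + m) = (· + m) ∘ (fun x => Real.sqrt v * x) := rfl
  rw [h2, ← Measure.map_map (measurable_add_const m) (measurable_const_mul _), h1,
    gaussianReal_map_add_const m, zero_add]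

lemma integral_transfer (m : ℝ) (v : ℝ≥0) (h : ℝ → ℝ) (hc : Continuous h) :
    ∫ x, h x ∂(gaussianReal m v) = ∫ x, h (Real.sqrt v * x + m) ∂(gaussianReal 0 1) := by
  rw [← map_std m v, integral_map (by fun_prop) hc.aestronglyMeasurable]

lemma integrable_transfer (m : ℝ) (v : ℝ≥0) (h : ℝ → ℝ) (hc : Continuous h)
    (hi : Integrable h (gaussianReal m v)) :
    Integrable (fun x => h (Real.sqrt v * x + m)) (gaussianReal 0 1) := by
  rw [← map_std m v] at hi
  exact (integrable_map_measure hc.aestronglyMeasurable (by fun_prop)).mp hi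

lemma abs_int_le (μ : Measure ℝ) [IsProbabilityMeasure μ] (f : ℝ → ℝ)
    (hm : AEStronglyMeasurable f μ) (hi2 : Integrable (fun x => f x ^ 2) μ) :
    ∫ x, |f x| ∂μ ≤ Real.sqrt (∫ x, f x ^ 2 ∂μ) := by
  have hmem : MemLp f 2 μ := (memLp_two_iff_integrable_sq hm).mpr hi2
  have habs : MemLp (fun x => |f x|) 2 μ := by
    have := hmem.norm
    simpa [Real.norm_eq_abs] using this
  have hone : MemLp (fun _ : ℝ => (1 : ℝ)) 2 μ := memLp_const 1
  have hpq : Real.HolderConjugate 2 2 := Real.HolderConjugate.two_two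
  have hH := integral_mul_le_Lp_mul_Lq_of_nonneg hpq
    (Filter.Eventually.of_forall fun x => abs_nonneg (f x))
    (Filter.Eventually.of_forall fun _ : ℝ => (zero_le_one : (0:ℝ) ≤ 1))
    (by simpa using habs) (by simpa using hone)
  simp only [mul_one] at hH
  calc ∫ x, |f x| ∂μ
      ≤ (∫ x, |f x| ^ (2 : ℝ) ∂μ) ^ (1 / 2 : ℝ) * (∫ _ : ℝ, (1 : ℝ) ^ (2 : ℝ) ∂μ) ^ (1 / 2 : ℝ) :=
        hH
    _ = Real.sqrt (∫ x, f x ^ 2 ∂μ) := by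
        have h1 : (fun x => |f x| ^ (2 : ℝ)) = fun x => f x ^ 2 := by
          funext x
          rw [Real.rpow_two, sq_abs]
        have h2 : ∫ _ : ℝ, (1 : ℝ) ^ (2 : ℝ) ∂μ = 1 := by simp
        rw [h1, h2, Real.one_rpow, mul_one, Real.sqrt_eq_rpow]

end GaussWassAux

open GaussWassAux Set

/-- Upper bound on the dual-form Wasserstein distance between two real Gaussians
by their 2-Wasserstein distance `√((m₁ − m₂)² + (√v₁ − √v₂)²)`. -/
theorem gaussian_wasserstein_upper_bound
    (m₁ m₂ : ℝ) (v₁ v₂ : ℝ≥0)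
    (h : ℝ → ℝ) (hLip : LipschitzWith 1 h)
    (h₁ : Integrable h (gaussianReal m₁ v₁)) (h₂ : Integrable h (gaussianReal m₂ v₂)) :
    |∫ x, h x ∂(gaussianReal m₁ v₁) - ∫ x, h x ∂(gaussianReal m₂ v₂)| ≤
      Real.sqrt ((m₁ - m₂) ^ 2 + (Real.sqrt v₁ - Real.sqrt v₂) ^ 2) := by
  have hc := hLip.continuous
  set γ := gaussianReal 0 1 with hγ
  set a := m₁ - m₂ with ha
  set c := Real.sqrt v₁ - Real.sqrt v₂ with hcdef
  rw [integral_transfer m₁ v₁ h hc, integral_transfer m₂ v₂ h hc]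
  have hint₁ := integrable_transfer m₁ v₁ h hc h₁
  have hint₂ := integrable_transfer m₂ v₂ h hc h₂
  have hx : Integrable (fun x : ℝ => x) γ := by simpa using i_poly 1
  have hx2 : Integrable (fun x : ℝ => x ^ 2) γ := i_poly 2
  have hil : Integrable (fun x => a + c * x) γ :=
    (integrable_const a).add (hx.const_mul c)
  have hilabs : Integrable (fun x => |a + c * x|) γ := hil.abs
  have key : |∫ x, h (Real.sqrt v₁ * x + m₁) ∂γ - ∫ x, h (Real.sqrt v₂ * x + m₂) ∂γ|
      ≤ ∫ x, |a + c * x| ∂γ := by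
    rw [← integral_sub hint₁ hint₂]
    calc |∫ x, (h (Real.sqrt v₁ * x + m₁) - h (Real.sqrt v₂ * x + m₂)) ∂γ|
        ≤ ∫ x, |h (Real.sqrt v₁ * x + m₁) - h (Real.sqrt v₂ * x + m₂)| ∂γ := by
          simpa [Real.norm_eq_abs] using
            norm_integral_le_integral_norm
              (fun x => h (Real.sqrt v₁ * x + m₁) - h (Real.sqrt v₂ * x + m₂)) (μ := γ)
      _ ≤ ∫ x, |a + c * x| ∂γ := by
          refine integral_mono (hint₁.sub hint₂).abs hilabs fun x => ?_
          have hd := hLip.dist_le_mul (Real.sqrt v₁ * x + m₁) (Real.sqrt v₂ * x + m₂)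
          simp only [NNReal.coe_one, one_mul, Real.dist_eq] at hd
          calc |h (Real.sqrt v₁ * x + m₁) - h (Real.sqrt v₂ * x + m₂)|
              ≤ |(Real.sqrt v₁ * x + m₁) - (Real.sqrt v₂ * x + m₂)| := hd
            _ = |a + c * x| := by rw [ha, hcdef]; ring_nf
  have hexp : ∫ x, (a + c * x) ^ 2 ∂γ = a ^ 2 + c ^ 2 := by
    have heq : ∫ x, (a + c * x) ^ 2 ∂γ
        = ∫ x, ((a ^ 2 + (2 * a * c) * x) + c ^ 2 * x ^ 2) ∂γ := by
      refine integral_congr_ae (Filter.Eventually.of_forall fun x => ?_)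
      ring
    calc ∫ x, (a + c * x) ^ 2 ∂γ
        = ∫ x, ((a ^ 2 + (2 * a * c) * x) + c ^ 2 * x ^ 2) ∂γ := heq
      _ = (∫ x, (a ^ 2 + (2 * a * c) * x) ∂γ) + ∫ x, c ^ 2 * x ^ 2 ∂γ :=
          integral_add ((integrable_const (a ^ 2)).add (hx.const_mul (2 * a * c)))
            (hx2.const_mul (c ^ 2))
      _ = ((∫ _, a ^ 2 ∂γ) + ∫ x, (2 * a * c) * x ∂γ) + ∫ x, c ^ 2 * x ^ 2 ∂γ := by
          rw [integral_add (integrable_const (a ^ 2)) (hx.const_mul (2 * a * c))]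
      _ = a ^ 2 + c ^ 2 := by
          rw [integral_const_mul, integral_const_mul, m1, m2, integral_const]
          simp
  have hisq : Integrable (fun x => (a + c * x) ^ 2) γ := by
    have heq : (fun x : ℝ => (a + c * x) ^ 2)
        = fun x => (a ^ 2 + (2 * a * c) * x) + c ^ 2 * x ^ 2 := by
      funext x; ring
    rw [heq]
    exact ((integrable_const (a ^ 2)).add (hx.const_mul _)).add (hx2.const_mul _)
  have hcs : ∫ x, |a + c * x| ∂γ ≤ Real.sqrt (a ^ 2 + c ^ 2) := by
    rw [← hexp]
    exact abs_int_le γ _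
      ((continuous_const.add (continuous_const.mul continuous_id)).aestronglyMeasurable) hisq
  exact key.trans hcs
end

section
/- Let η > 0, m ∈ ℝ, and v ≥ 0. Let μ = gaussianReal m v, and let μ_ref = gaussianReal (η · ⌊m/η⌋) (η² · ⌊v/η²⌋) be the reference Gaussian obtained by rounding the mean down to the grid ηℤ and the variance down to the grid η²ℤ (with ⌊·⌋ the integer floor). Then for every 1-Lipschitz function h : ℝ → ℝ that is integrable with respect to both μ and μ_ref, |∫ h dμ − ∫ h dμ_ref| ≤ √2 · η. -/
open MeasureTheory ProbabilityTheory NNReal Real Filter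
open scoped ENNReal

lemma pdf01 (x : ℝ) : gaussianPDFReal 0 1 x = (Real.sqrt (2*Real.pi))⁻¹ * Real.exp (-(2⁻¹:ℝ) * x^2) := by
  simp only [gaussianPDFReal, NNReal.coe_one, mul_one, sub_zero]
  ring_nf

lemma integral_g01 (g : ℝ → ℝ) :
    ∫ x, g x ∂(gaussianReal 0 1) = ∫ x, gaussianPDFReal 0 1 x * g x := by
  rw [gaussianReal_of_var_ne_zero _ one_ne_zero]
  have : (gaussianPDF 0 1) = fun x => ((gaussianPDFReal 0 1 x).toNNReal : ℝ≥0∞) := rfl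
  rw [this, integral_withDensity_eq_integral_smul ((measurable_gaussianPDFReal 0 1).real_toNNReal) g]
  congr 1; ext x
  simp [NNReal.smul_def, Real.coe_toNNReal _ (gaussianPDFReal_nonneg 0 1 x)]

lemma integrable_g01_iff (g : ℝ → ℝ) :
    Integrable g (gaussianReal 0 1) ↔ Integrable (fun x => g x * gaussianPDFReal 0 1 x) := by
  rw [gaussianReal_of_var_ne_zero _ one_ne_zero]
  rw [gaussianPDF_def, integrable_withDensity_iff (measurable_gaussianPDFReal 0 1).ennreal_ofReal (ae_of_all _ fun x => ENNReal.ofReal_lt_top)]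
  constructor
  · intro hh
    refine hh.congr (ae_of_all _ fun x => ?_)
    simp [gaussianPDF, ENNReal.toReal_ofReal (gaussianPDFReal_nonneg 0 1 x)]
  · intro hh
    refine hh.congr (ae_of_all _ fun x => ?_)
    simp [gaussianPDF, ENNReal.toReal_ofReal (gaussianPDFReal_nonneg 0 1 x)]

lemma int_exp' : Integrable (fun x : ℝ => Real.exp (-(2⁻¹:ℝ) * x^2)) :=
  integrable_exp_neg_mul_sq (by norm_num)

lemma int_x_exp' : Integrable (fun x : ℝ => x * Real.exp (-(2⁻¹:ℝ) * x^2)) :=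
  integrable_mul_exp_neg_mul_sq (by norm_num)

lemma hderiv_exp (x : ℝ) : HasDerivAt (fun x : ℝ => -Real.exp (-(2⁻¹:ℝ) * x^2))
    (x * Real.exp (-(2⁻¹:ℝ) * x^2)) x := by
  have h1 : HasDerivAt (fun x : ℝ => -(2⁻¹:ℝ) * x^2) (-(2⁻¹:ℝ) * (2 * x)) x := by
    simpa using ((hasDerivAt_pow 2 x).const_mul (-(2⁻¹:ℝ)))
  have := (h1.exp).neg
  exact this.congr_deriv (by ring)

lemma hderiv_xexp (x : ℝ) : HasDerivAt (fun x : ℝ => -x * Real.exp (-(2⁻¹:ℝ) * x^2))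
    (x^2 * Real.exp (-(2⁻¹:ℝ) * x^2) - Real.exp (-(2⁻¹:ℝ) * x^2)) x := by
  have h1 : HasDerivAt (fun x : ℝ => -(2⁻¹:ℝ) * x^2) (-(2⁻¹:ℝ) * (2 * x)) x := by
    simpa using ((hasDerivAt_pow 2 x).const_mul (-(2⁻¹:ℝ)))
  have := ((hasDerivAt_id x).neg.mul h1.exp)
  exact this.congr_deriv (by simp only [Pi.neg_apply, id_eq]; ring)

lemma tendsto_exp_half' : Tendsto (fun x : ℝ => Real.exp (-(1/2) * x)) atTop (nhds 0) := by
  apply Real.tendsto_exp_atBot.comp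
  exact Tendsto.const_mul_atTop_of_neg (by norm_num) tendsto_id

lemma tendsto_pow_exp_atTop' (s : ℝ) :
    Tendsto (fun x : ℝ => x ^ s * Real.exp (-(2⁻¹:ℝ) * x^2)) atTop (nhds 0) := by
  have h := rpow_mul_exp_neg_mul_sq_isLittleO_exp_neg (b := (2⁻¹:ℝ)) (by norm_num) s
  exact h.trans_tendsto tendsto_exp_half'

lemma tendsto_x_exp_atTop' : Tendsto (fun x : ℝ => x * Real.exp (-(2⁻¹:ℝ) * x^2)) atTop (nhds 0) := by
  refine (tendsto_pow_exp_atTop' 1).congr' ?_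
  filter_upwards [eventually_ge_atTop (0:ℝ)] with x hx
  rw [Real.rpow_one]

lemma tendsto_x_exp_atBot' : Tendsto (fun x : ℝ => x * Real.exp (-(2⁻¹:ℝ) * x^2)) atBot (nhds 0) := by
  have h := (tendsto_x_exp_atTop'.comp tendsto_neg_atBot_atTop).neg
  rw [neg_zero] at h
  refine h.congr fun x => ?_
  simp [Function.comp]

lemma tendsto_exp_sq_atTop' : Tendsto (fun x : ℝ => Real.exp (-(2⁻¹:ℝ) * x^2)) atTop (nhds 0) := by
  refine (tendsto_pow_exp_atTop' 0).congr' ?_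
  filter_upwards [eventually_gt_atTop (0:ℝ)] with x hx
  rw [Real.rpow_zero, one_mul]

lemma tendsto_exp_sq_atBot' : Tendsto (fun x : ℝ => Real.exp (-(2⁻¹:ℝ) * x^2)) atBot (nhds 0) := by
  have h := tendsto_exp_sq_atTop'.comp tendsto_neg_atBot_atTop
  refine h.congr fun x => ?_
  simp [Function.comp]

lemma integral_x_exp : ∫ x : ℝ, x * Real.exp (-(2⁻¹:ℝ) * x^2) = 0 := by
  have := integral_of_hasDerivAt_of_tendsto hderiv_exp int_x_exp'
    (tendsto_exp_sq_atBot'.neg.congr (fun x => rfl)) (tendsto_exp_sq_atTop'.neg.congr (fun x => rfl))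
  simpa using this

lemma integral_exp_sq : ∫ x : ℝ, Real.exp (-(2⁻¹:ℝ) * x^2) = Real.sqrt (2 * Real.pi) := by
  rw [integral_gaussian]
  rw [show (Real.pi / 2⁻¹) = 2 * Real.pi by ring]

lemma integral_x2_exp : ∫ x : ℝ, x^2 * Real.exp (-(2⁻¹:ℝ) * x^2) = Real.sqrt (2 * Real.pi) := by
  have hint : Integrable (fun x : ℝ => x^2 * Real.exp (-(2⁻¹:ℝ) * x^2)) := by
    have := integrable_rpow_mul_exp_neg_mul_sq (b := (2⁻¹:ℝ)) (by norm_num) (s := 2) (by norm_num)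
    refine this.congr (ae_of_all _ fun x => ?_)
    have : x ^ (2:ℝ) = x ^ (2:ℕ) := by rw [← Real.rpow_natCast x 2]; norm_num
    simp [this]
  have htop : Tendsto (fun x : ℝ => -x * Real.exp (-(2⁻¹:ℝ) * x^2)) atTop (nhds 0) := by
    have := tendsto_x_exp_atTop'.neg
    rw [neg_zero] at this
    exact this.congr fun x => by ring
  have hbot : Tendsto (fun x : ℝ => -x * Real.exp (-(2⁻¹:ℝ) * x^2)) atBot (nhds 0) := by
    have := tendsto_x_exp_atBot'.neg
    rw [neg_zero] at this
    exact this.congr fun x => by ring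
  have h0 := integral_of_hasDerivAt_of_tendsto hderiv_xexp (hint.sub int_exp') hbot htop
  rw [integral_sub hint int_exp', integral_exp_sq] at h0
  linarith

noncomputable def cst : ℝ := (Real.sqrt (2*Real.pi))⁻¹

lemma cst_mul : cst * Real.sqrt (2*Real.pi) = 1 := by
  rw [cst, inv_mul_cancel₀]
  positivity

lemma integrable_x_g01 : Integrable (fun x : ℝ => x) (gaussianReal 0 1) := by
  rw [integrable_g01_iff]
  refine (int_x_exp'.const_mul cst).congr (ae_of_all _ fun x => ?_)
  simp only [pdf01, cst]
  ring

lemma integrable_x2_g01 : Integrable (fun x : ℝ => x^2) (gaussianReal 0 1) := by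
  rw [integrable_g01_iff]
  have : Integrable (fun x : ℝ => x^2 * Real.exp (-(2⁻¹:ℝ) * x^2)) := by
    have := integrable_rpow_mul_exp_neg_mul_sq (b := (2⁻¹:ℝ)) (by norm_num) (s := 2) (by norm_num)
    refine this.congr (ae_of_all _ fun x => ?_)
    have : x ^ (2:ℝ) = x ^ (2:ℕ) := by rw [← Real.rpow_natCast x 2]; norm_num
    simp [this]
  refine (this.const_mul cst).congr (ae_of_all _ fun x => ?_)
  simp only [pdf01, cst]
  ring

lemma integral_x_g01 : ∫ x, x ∂(gaussianReal 0 1) = 0 := by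
  rw [integral_g01 (fun x => x)]
  have : ∀ x : ℝ, gaussianPDFReal 0 1 x * x = cst * (x * Real.exp (-(2⁻¹:ℝ) * x^2)) := by
    intro x; rw [pdf01]; simp [cst]; ring
  simp_rw [this]
  rw [integral_const_mul, integral_x_exp, mul_zero]

lemma integral_x2_g01 : ∫ x, x^2 ∂(gaussianReal 0 1) = 1 := by
  rw [integral_g01 (fun x => x^2)]
  have : ∀ x : ℝ, gaussianPDFReal 0 1 x * x^2 = cst * (x^2 * Real.exp (-(2⁻¹:ℝ) * x^2)) := by
    intro x; rw [pdf01]; simp [cst]; ring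
  simp_rw [this]
  rw [integral_const_mul, integral_x2_exp, cst_mul]

lemma integral_sq_affine (a b : ℝ) :
    ∫ x, (a + b*x)^2 ∂(gaussianReal 0 1) = a^2 + b^2 := by
  have hexp : (fun x : ℝ => (a + b*x)^2)
      = fun x => a^2 + ((2*a*b)*x + b^2*x^2) := by ext x; ring
  rw [hexp]
  have hg1 : Integrable (fun x : ℝ => (2*a*b)*x) (gaussianReal 0 1) :=
    integrable_x_g01.const_mul (2*a*b)
  have hg2 : Integrable (fun x : ℝ => b^2*x^2) (gaussianReal 0 1) :=
    integrable_x2_g01.const_mul (b^2)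
  have hg : Integrable (fun x : ℝ => (2*a*b)*x + b^2*x^2) (gaussianReal 0 1) := hg1.add hg2
  rw [integral_add (integrable_const _) hg, integral_add hg1 hg2,
    integral_const_mul, integral_const_mul, integral_x_g01, integral_x2_g01]
  simp

lemma integrable_sq_affine (a b : ℝ) :
    Integrable (fun x => (a + b*x)^2) (gaussianReal 0 1) := by
  have hexp : (fun x : ℝ => (a + b*x)^2)
      = fun x => a^2 + ((2*a*b)*x + b^2*x^2) := by ext x; ring
  rw [hexp]
  have hg1 : Integrable (fun x : ℝ => (2*a*b)*x) (gaussianReal 0 1) :=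
    integrable_x_g01.const_mul (2*a*b)
  have hg2 : Integrable (fun x : ℝ => b^2*x^2) (gaussianReal 0 1) :=
    integrable_x2_g01.const_mul (b^2)
  exact (integrable_const _).add (hg1.add hg2)

lemma abs_affine_le (a b : ℝ) :
    ∫ x, |a + b*x| ∂(gaussianReal 0 1) ≤ Real.sqrt (a^2 + b^2) := by
  set γ := gaussianReal 0 1
  have hmeas : AEStronglyMeasurable (fun x : ℝ => a + b*x) γ :=
    (continuous_const.add (continuous_const.mul continuous_id)).aestronglyMeasurable
  have hmem : MemLp (fun x : ℝ => a + b*x) 2 γ :=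
    (memLp_two_iff_integrable_sq hmeas).2 (integrable_sq_affine a b)
  have hpq : Real.HolderConjugate 2 2 := Real.HolderConjugate.two_two
  have h2 : ENNReal.ofReal (2:ℝ) = 2 := by norm_num
  have hcs := integral_mul_le_Lp_mul_Lq_of_nonneg (μ := γ) hpq
    (f := fun x => |a + b*x|) (g := fun _ => 1)
    (ae_of_all _ fun x => abs_nonneg _) (ae_of_all _ fun x => zero_le_one)
    (h2 ▸ hmem.abs) (h2 ▸ memLp_const 1)
  simp only [mul_one, one_pow] at hcs
  calc ∫ x, |a + b*x| ∂γ ≤ (∫ x, |a + b*x| ^ (2:ℝ) ∂γ) ^ (1/2:ℝ) * (∫ _x, (1:ℝ)^(2:ℝ) ∂γ) ^ (1/2:ℝ) := hcs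
  _ = Real.sqrt (a^2 + b^2) := by
      have h1 : ∀ x : ℝ, |a + b*x| ^ (2:ℝ) = (a + b*x)^2 := by
        intro x
        rw [show ((2:ℝ)) = ((2:ℕ):ℝ) by norm_num, Real.rpow_natCast, sq_abs]
      simp_rw [h1]
      rw [integral_sq_affine]
      simp only [Real.one_rpow]
      rw [integral_const]
      simp only [measure_univ, probReal_univ, ENNReal.toReal_one, smul_eq_mul, one_mul, Real.one_rpow, mul_one]
      rw [← Real.sqrt_eq_rpow]

lemma map_affine_g01 (m : ℝ) (v : ℝ≥0) :
    (gaussianReal 0 1).map (fun x => Real.sqrt v * x + m) = gaussianReal m v := by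
  have hc : (⟨(Real.sqrt v)^2, sq_nonneg _⟩ : ℝ≥0) * 1 = v := by
    ext
    simp [Real.sq_sqrt v.2]
  have h1 : (gaussianReal 0 1).map (fun x => Real.sqrt v * x) = gaussianReal 0 v := by
    have := gaussianReal_map_const_mul (μ := 0) (v := 1) (Real.sqrt v)
    simpa [hc] using this
  have h2 : (fun x => Real.sqrt v * x + m)
      = (fun x => x + m) ∘ (fun x => Real.sqrt v * x) := rfl
  have hg : Measurable (fun x : ℝ => x + m) := measurable_add_const m
  have hf : Measurable (fun x : ℝ => Real.sqrt v * x) := measurable_const_mul _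
  rw [h2, ← Measure.map_map hg hf, h1, gaussianReal_map_add_const m, zero_add]

lemma integral_gaussian_affine {h : ℝ → ℝ} (hLip : LipschitzWith 1 h) (m : ℝ) (v : ℝ≥0) :
    ∫ x, h x ∂(gaussianReal m v) = ∫ x, h (Real.sqrt v * x + m) ∂(gaussianReal 0 1) := by
  rw [← map_affine_g01 m v, integral_map
    ((measurable_const_mul _).add_const m).aemeasurable hLip.continuous.aestronglyMeasurable]

lemma integrable_gaussian_affine {h : ℝ → ℝ} (hLip : LipschitzWith 1 h) {m : ℝ} {v : ℝ≥0}
    (hint : Integrable h (gaussianReal m v)) :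
    Integrable (fun x => h (Real.sqrt v * x + m)) (gaussianReal 0 1) := by
  rw [← map_affine_g01 m v] at hint
  have := (integrable_map_measure hLip.continuous.aestronglyMeasurable
    ((measurable_const_mul (Real.sqrt v)).add_const m).aemeasurable).1 hint
  exact this

/-- Rounding the mean of a Gaussian down to the grid `ηℤ` and its variance down to
the grid `η²ℤ` moves it by at most `√2 · η` in the dual-form Wasserstein distance. -/
theorem gaussian_reference_rounding_bound
    (η m : ℝ) (v : ℝ≥0) (hη : 0 < η)
    (h : ℝ → ℝ) (hLip : LipschitzWith 1 h)
    (h₁ : Integrable h (gaussianReal m v))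
    (h₂ : Integrable h
      (gaussianReal (η * ⌊m / η⌋) (η ^ 2 * ⌊(v : ℝ) / η ^ 2⌋ : ℝ).toNNReal)) :
    |∫ x, h x ∂(gaussianReal m v) -
        ∫ x, h x ∂(gaussianReal (η * ⌊m / η⌋) (η ^ 2 * ⌊(v : ℝ) / η ^ 2⌋ : ℝ).toNNReal)| ≤
      Real.sqrt 2 * η := by
  set m' : ℝ := η * ⌊m / η⌋ with hm'
  set v' : ℝ≥0 := (η ^ 2 * ⌊(v : ℝ) / η ^ 2⌋ : ℝ).toNNReal with hv'
  have hη2 : (0:ℝ) < η ^ 2 := by positivity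
  have hfloor_nonneg : (0:ℝ) ≤ (⌊(v : ℝ) / η ^ 2⌋ : ℝ) := by
    exact_mod_cast Int.floor_nonneg.2 (div_nonneg v.2 hη2.le)
  have hv'c : (v' : ℝ) = η ^ 2 * ⌊(v : ℝ) / η ^ 2⌋ :=
    Real.coe_toNNReal _ (mul_nonneg hη2.le hfloor_nonneg)
  have hv'le : (v' : ℝ) ≤ (v : ℝ) := by
    rw [hv'c]
    calc η ^ 2 * ⌊(v : ℝ) / η ^ 2⌋ ≤ η ^ 2 * ((v:ℝ) / η ^ 2) :=
      mul_le_mul_of_nonneg_left (Int.floor_le _) hη2.le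
    _ = (v:ℝ) := by field_simp
  have hv'gt : (v : ℝ) - (v' : ℝ) ≤ η ^ 2 := by
    rw [hv'c]
    have := Int.lt_floor_add_one ((v : ℝ) / η ^ 2)
    have h3 : (v:ℝ) / η^2 * η^2 < (⌊(v : ℝ) / η ^ 2⌋ + 1) * η^2 :=
      mul_lt_mul_of_pos_right this hη2
    rw [div_mul_cancel₀ _ hη2.ne'] at h3
    nlinarith
  have hm1 : m' ≤ m := by
    rw [hm', mul_comm]
    calc (⌊m / η⌋ : ℝ) * η ≤ m / η * η := mul_le_mul_of_nonneg_right (Int.floor_le _) hη.le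
    _ = m := div_mul_cancel₀ _ hη.ne'
  have hm2 : m - m' ≤ η := by
    have := Int.lt_floor_add_one (m / η)
    have h3 : m / η * η < (⌊m / η⌋ + 1) * η := mul_lt_mul_of_pos_right this hη
    rw [div_mul_cancel₀ _ hη.ne'] at h3
    rw [hm']
    nlinarith
  set σ : ℝ := Real.sqrt v with hσ
  set σ' : ℝ := Real.sqrt v' with hσ'
  have hσle : σ' ≤ σ := Real.sqrt_le_sqrt hv'le
  have hσsq : σ ^ 2 = (v:ℝ) := Real.sq_sqrt v.2
  have hσ'sq : σ' ^ 2 = (v':ℝ) := Real.sq_sqrt v'.2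
  have hσσ' : σ' * σ' ≤ σ * σ' := mul_le_mul_of_nonneg_right hσle (Real.sqrt_nonneg _)
  have hσdiff : (σ - σ') ^ 2 ≤ η ^ 2 := by nlinarith
  have hmdiff : (m - m') ^ 2 ≤ η ^ 2 := by nlinarith
  -- transport to standard gaussian
  rw [integral_gaussian_affine hLip m v, integral_gaussian_affine hLip m' v']
  have hi1 := integrable_gaussian_affine hLip h₁
  have hi2 := integrable_gaussian_affine hLip h₂
  rw [← integral_sub hi1 hi2]
  set γ := gaussianReal 0 1
  have hbound_int : Integrable (fun x => |(m - m') + (σ - σ') * x|) γ :=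
    ((integrable_const (m - m')).add (integrable_x_g01.const_mul (σ - σ'))).abs
  calc |∫ x, (h (σ * x + m) - h (σ' * x + m')) ∂γ|
      ≤ ∫ x, |h (σ * x + m) - h (σ' * x + m')| ∂γ := by
        simpa [Real.norm_eq_abs] using
          norm_integral_le_integral_norm (μ := γ) (fun x => h (σ * x + m) - h (σ' * x + m'))
    _ ≤ ∫ x, |(m - m') + (σ - σ') * x| ∂γ := by
        refine integral_mono (hi1.sub hi2).abs hbound_int fun x => ?_
        have hd := hLip.dist_le_mul (σ * x + m) (σ' * x + m')
        rw [Real.dist_eq, Real.dist_eq] at hd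
        simp only [NNReal.coe_one, one_mul] at hd
        calc |h (σ * x + m) - h (σ' * x + m')| ≤ |σ * x + m - (σ' * x + m')| := hd
        _ = |(m - m') + (σ - σ') * x| := by ring_nf
    _ ≤ Real.sqrt ((m - m') ^ 2 + (σ - σ') ^ 2) := abs_affine_le (m - m') (σ - σ')
    _ ≤ Real.sqrt (η ^ 2 + η ^ 2) := Real.sqrt_le_sqrt (by linarith)
    _ = Real.sqrt 2 * η := by
        rw [show η ^ 2 + η ^ 2 = 2 * η ^ 2 by ring, Real.sqrt_mul (by norm_num),
          Real.sqrt_sq hη.le]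
end

section
/- Let X be a metric space with its Borel σ-algebra, μ and ν probability measures on X, η > 0, ι a finite index type, A : ι → Set X pairwise disjoint measurable sets with ⋃ᵢ Aᵢ = X, and q : ι → X points with dist(x, qᵢ) ≤ η for every i and every x ∈ Aᵢ. Let c ≥ 0 be such that |∫ g dμ − ∫ g dν| ≤ c for every 1-Lipschitz function g : X → ℝ that is integrable with respect to both μ and ν. Then for every 1-Lipschitz function h : X → ℝ integrable with respect to both μ and ν, |∑ᵢ (μ(Aᵢ) − ν(Aᵢ)) · h(qᵢ)| ≤ c + 2η. -/
open MeasureTheory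

/-- Discretizing two probability measures over a common partition of fineness `η`
increases their dual-form Wasserstein distance by at most `2η`: if `W(μ − ν) ≤ c`
then `|∑ i (μ(Aᵢ) − ν(Aᵢ)) h(qᵢ)| ≤ c + 2η` for every 1-Lipschitz `h`. -/
theorem discretization_pair_wasserstein_bound
    {X : Type*} [MetricSpace X] [MeasurableSpace X] [BorelSpace X]
    (μ ν : Measure X) [IsProbabilityMeasure μ] [IsProbabilityMeasure ν]
    (η : ℝ) (hη : 0 < η)
    {ι : Type*} [Fintype ι] (A : ι → Set X) (q : ι → X)
    (hmeas : ∀ i, MeasurableSet (A i))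
    (hdisj : Pairwise (Function.onFun Disjoint A))
    (hcover : (⋃ i, A i) = Set.univ)
    (hfine : ∀ i, ∀ x ∈ A i, dist x (q i) ≤ η)
    (c : ℝ) (hc : 0 ≤ c)
    (hW : ∀ g : X → ℝ, LipschitzWith 1 g → Integrable g μ → Integrable g ν →
      |∫ x, g x ∂μ - ∫ x, g x ∂ν| ≤ c)
    (h : X → ℝ) (hLip : LipschitzWith 1 h)
    (hμ : Integrable h μ) (hν : Integrable h ν) :
    |∑ i, ((μ (A i)).toReal - (ν (A i)).toReal) * h (q i)| ≤ c + 2 * η := by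
  classical
  set f : X → ℝ := fun x => ∑ i, (A i).indicator (fun _ => h (q i)) x with hf_def
  have hint : ∀ (ρ : Measure X) [IsProbabilityMeasure ρ], Integrable f ρ := by
    intro ρ _
    exact integrable_finset_sum _ (fun i _ => (integrable_const _).indicator (hmeas i))
  have hval : ∀ (ρ : Measure X) [IsProbabilityMeasure ρ],
      ∫ x, f x ∂ρ = ∑ i, (ρ (A i)).toReal * h (q i) := by
    intro ρ _
    rw [hf_def]
    rw [integral_finset_sum _ (fun i _ => (integrable_const _).indicator (hmeas i))]
    refine Finset.sum_congr rfl fun i _ => ?_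
    rw [integral_indicator_const _ (hmeas i), smul_eq_mul, measureReal_def]
  have hfh : ∀ x, |f x - h x| ≤ η := by
    intro x
    have hx : x ∈ ⋃ i, A i := hcover ▸ Set.mem_univ x
    obtain ⟨_, ⟨i₀, rfl⟩, hxi⟩ := hx
    have hfx : f x = h (q i₀) := by
      rw [hf_def]
      refine Finset.sum_eq_single i₀ (fun j _ hj => ?_) (fun hj => absurd (Finset.mem_univ i₀) hj)
          |>.trans (Set.indicator_of_mem hxi _)
      exact Set.indicator_of_notMem (fun hxj => (hdisj hj).le_bot ⟨hxj, hxi⟩) _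
    rw [hfx]
    calc |h (q i₀) - h x| = dist (h (q i₀)) (h x) := (Real.dist_eq _ _).symm
      _ ≤ 1 * dist (q i₀) x := hLip.dist_le_mul _ _
      _ = dist x (q i₀) := by rw [one_mul, dist_comm]
      _ ≤ η := hfine i₀ x hxi
  have hdiff : ∀ (ρ : Measure X) [IsProbabilityMeasure ρ], Integrable h ρ →
      |∫ x, f x ∂ρ - ∫ x, h x ∂ρ| ≤ η := by
    intro ρ _ hh
    rw [← integral_sub (hint ρ) hh]
    calc |∫ x, f x - h x ∂ρ| ≤ ∫ x, |f x - h x| ∂ρ := by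
          simpa [Real.norm_eq_abs] using norm_integral_le_integral_norm (fun x => f x - h x) (μ := ρ)
      _ ≤ ∫ _x, η ∂ρ := integral_mono ((hint ρ).sub hh).abs (integrable_const _)
          (fun x => hfh x)
      _ = η := by simp
  have key : ∑ i, ((μ (A i)).toReal - (ν (A i)).toReal) * h (q i)
      = (∫ x, f x ∂μ) - ∫ x, f x ∂ν := by
    rw [hval μ, hval ν, ← Finset.sum_sub_distrib]
    refine Finset.sum_congr rfl fun i _ => by ring
  rw [key]
  have := hW h hLip hμ hν
  calc |(∫ x, f x ∂μ) - ∫ x, f x ∂ν|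
      = |((∫ x, f x ∂μ) - ∫ x, h x ∂μ) + ((∫ x, h x ∂μ) - ∫ x, h x ∂ν)
          + ((∫ x, h x ∂ν) - ∫ x, f x ∂ν)| := by ring_nf
    _ ≤ |(∫ x, f x ∂μ) - ∫ x, h x ∂μ| + |(∫ x, h x ∂μ) - ∫ x, h x ∂ν|
          + |(∫ x, h x ∂ν) - ∫ x, f x ∂ν| := abs_add_three _ _ _
    _ ≤ η + c + η :=
        add_le_add (add_le_add (hdiff μ hμ) this) (by rw [abs_sub_comm]; exact hdiff ν hν)
    _ = c + 2 * η := by ring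
end
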